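/- An n×n real matrix X = (x_{ij}) lies in the convex hull of the n×n alternating sign matrices if and only if all partial row sums x_{i,1}+...+x_{i,j'} and all partial column sums x_{1,j}+...+x_{i',j} lie in [0,1], and every full row sum and every full column sum equals 1. -/

import Mathlib

open scoped BigOperators
open scoped Classical

namespace ASMPaper

variable {n : ℕ}

/-- Partial row sum `W_{ij} = ∑_{j' ≤ j} a_{i j'}`. -/
def rowPartial (A : Matrix (Fin n) (Fin n) ℝ) (i j : Fin n) : ℝ :=
  ∑ j' ∈ Finset.univ.filter (fun j' : Fin n => j' ≤ j), A i j'

/-- Partial column sum `N_{ij} = ∑_{i' ≤ i} a_{i' j}`. -/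
def colPartial (A : Matrix (Fin n) (Fin n) ℝ) (i j : Fin n) : ℝ :=
  ∑ i' ∈ Finset.univ.filter (fun i' : Fin n => i' ≤ i), A i' j

/-- An alternating sign matrix: entries in {0,1,-1}, rows and columns sum to 1,
nonzero entries alternating in sign along rows and columns (equivalently, all
partial row and column sums lie in {0,1}). -/
def IsASM (A : Matrix (Fin n) (Fin n) ℝ) : Prop :=
  (∀ i j, A i j = 0 ∨ A i j = 1 ∨ A i j = -1) ∧
  (∀ i j, rowPartial A i j = 0 ∨ rowPartial A i j = 1) ∧
  (∀ i j, colPartial A i j = 0 ∨ colPartial A i j = 1) ∧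
  (∀ i, ∑ j, A i j = 1) ∧
  (∀ j, ∑ i, A i j = 1)

/-- The ASM polytope: convex hull of the `n × n` alternating sign matrices. -/
def ASMPolytope (n : ℕ) : Set (Matrix (Fin n) (Fin n) ℝ) :=
  convexHull ℝ {A : Matrix (Fin n) (Fin n) ℝ | IsASM A}

/-- A face of a convex set: a convex extreme subset. -/
def IsFaceOf (F P : Set (Matrix (Fin n) (Fin n) ℝ)) : Prop :=
  IsExtreme ℝ P F ∧ Convex ℝ F

/-- A facet: a nonempty face of dimension one less. -/
def IsFacetOf (G F : Set (Matrix (Fin n) (Fin n) ℝ)) : Prop :=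
  IsFaceOf G F ∧ G.Nonempty ∧
    Module.finrank ℝ (vectorSpan ℝ G) + 1 = Module.finrank ℝ (vectorSpan ℝ F)

/-- The ASMs (vertices) belonging to a face `F`. -/
def faceASMs (F : Set (Matrix (Fin n) (Fin n) ℝ)) : Set (Matrix (Fin n) (Fin n) ℝ) :=
  {A | A ∈ F ∧ IsASM A}

/-- `A` and `B` are estranged in `F` if no proper face of `F` contains both. -/
def Estranged (F : Set (Matrix (Fin n) (Fin n) ℝ)) (A B : Matrix (Fin n) (Fin n) ℝ) : Prop :=
  ∀ F', IsFaceOf F' F → F' ≠ F → ¬(A ∈ F' ∧ B ∈ F')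

/-- The doubly directed graph of a set `X` of ASMs: grid vertices `(i,j)`, with an
(undirected) edge between orthogonally adjacent grid vertices whenever the
corresponding grid edge receives both orientations among the simple flow grids of
members of `X` (the orientation of a grid edge in the simple flow grid of `A` is
determined by the relevant partial sum of `A`). -/
def ddGraph (X : Set (Matrix (Fin n) (Fin n) ℝ)) : SimpleGraph (Fin n × Fin n) where
  Adj v w :=
    (v.1 = w.1 ∧ ((v.2 : ℕ) + 1 = (w.2 : ℕ) ∨ (w.2 : ℕ) + 1 = (v.2 : ℕ)) ∧
      ∃ A ∈ X, ∃ B ∈ X, rowPartial A v.1 (min v.2 w.2) ≠ rowPartial B v.1 (min v.2 w.2)) ∨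
    (v.2 = w.2 ∧ ((v.1 : ℕ) + 1 = (w.1 : ℕ) ∨ (w.1 : ℕ) + 1 = (v.1 : ℕ)) ∧
      ∃ A ∈ X, ∃ B ∈ X, colPartial A (min v.1 w.1) v.2 ≠ colPartial B (min v.1 w.1) v.2)
  symm := ⟨by
    rintro v w (⟨h1, h2, h3⟩ | ⟨h1, h2, h3⟩)
    · exact Or.inl ⟨h1.symm, h2.symm, by rw [min_comm, ← h1]; exact h3⟩
    · exact Or.inr ⟨h1.symm, h2.symm, by rw [min_comm, ← h1]; exact h3⟩⟩
  loopless := ⟨by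
    rintro v (⟨-, h2, -⟩ | ⟨-, h2, -⟩) <;> rcases h2 with h | h <;> omega⟩

/-- Degree of a grid vertex in the doubly directed graph. -/
noncomputable def ddDegree (X : Set (Matrix (Fin n) (Fin n) ℝ)) (v : Fin n × Fin n) : ℕ :=
  ((ddGraph X).neighborSet v).ncard

/-- The (non-isolated) vertices of the doubly directed graph. -/
def ddSupport (X : Set (Matrix (Fin n) (Fin n) ℝ)) : Set (Fin n × Fin n) :=
  {v | ∃ w, (ddGraph X).Adj v w}

/-- The doubly directed graph is connected (on its support). -/
def DDConnected (X : Set (Matrix (Fin n) (Fin n) ℝ)) : Prop :=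
  ∀ v ∈ ddSupport X, ∀ w ∈ ddSupport X, (ddGraph X).Reachable v w

/-! ### Auxiliary development for Statement 1 -/

section Aux

open Finset

variable {n : ℕ}

/-- Extension of a matrix to `ℕ × ℕ` indices, zero outside the grid. -/
noncomputable def ment (X : Matrix (Fin n) (Fin n) ℝ) (i j : ℕ) : ℝ :=
  if h : i < n ∧ j < n then X ⟨i, h.1⟩ ⟨j, h.2⟩ else 0

/-- Corner (cumulative) sums. -/
noncomputable def cs (X : Matrix (Fin n) (Fin n) ℝ) (a b : ℕ) : ℝ :=
  ∑ i ∈ Finset.range a, ∑ j ∈ Finset.range b, ment X i j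

lemma ment_apply (X : Matrix (Fin n) (Fin n) ℝ) (i j : Fin n) : ment X i j = X i j := by
  rw [ment, dif_pos ⟨i.2, j.2⟩]

lemma rowPartial_eq (X : Matrix (Fin n) (Fin n) ℝ) (i j : Fin n) :
    rowPartial X i j = ∑ k ∈ Finset.range (j.1 + 1), ment X i k := by
  have h1 : rowPartial X i j = ∑ k ∈ Finset.range n, if k ≤ j.1 then ment X i k else 0 := by
    rw [rowPartial, Finset.sum_filter,
      ← Fin.sum_univ_eq_sum_range (fun k => if k ≤ j.1 then ment X i.1 k else 0) n]
    exact Finset.sum_congr rfl fun j' _ => by exact if_congr Fin.le_def (ment_apply X i j').symm rfl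
  rw [h1, ← Finset.sum_subset (Finset.range_subset_range.2 j.2)
      (fun k _ hk => if_neg (by simp only [Finset.mem_range] at hk ⊢; omega))]
  exact Finset.sum_congr rfl fun k hk => if_pos (by simp only [Finset.mem_range] at hk; omega)

lemma colPartial_eq (X : Matrix (Fin n) (Fin n) ℝ) (i j : Fin n) :
    colPartial X i j = ∑ k ∈ Finset.range (i.1 + 1), ment X k j := by
  have h1 : colPartial X i j = ∑ k ∈ Finset.range n, if k ≤ i.1 then ment X k j.1 else 0 := by
    rw [colPartial, Finset.sum_filter,
      ← Fin.sum_univ_eq_sum_range (fun k => if k ≤ i.1 then ment X k j.1 else 0) n]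
    exact Finset.sum_congr rfl fun i' _ => by exact if_congr Fin.le_def (ment_apply X i' j).symm rfl
  rw [h1, ← Finset.sum_subset (Finset.range_subset_range.2 i.2)
      (fun k _ hk => if_neg (by simp only [Finset.mem_range] at hk ⊢; omega))]
  exact Finset.sum_congr rfl fun k hk => if_pos (by simp only [Finset.mem_range] at hk; omega)

lemma cs_zero_left (X : Matrix (Fin n) (Fin n) ℝ) (b : ℕ) : cs X 0 b = 0 := by simp [cs]

lemma cs_zero_right (X : Matrix (Fin n) (Fin n) ℝ) (a : ℕ) : cs X a 0 = 0 := by simp [cs]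

lemma cs_succ_left (X : Matrix (Fin n) (Fin n) ℝ) (a b : ℕ) :
    cs X (a + 1) b = cs X a b + ∑ k ∈ Finset.range b, ment X a k :=
  Finset.sum_range_succ _ a

lemma cs_succ_right (X : Matrix (Fin n) (Fin n) ℝ) (a b : ℕ) :
    cs X a (b + 1) = cs X a b + ∑ k ∈ Finset.range a, ment X k b := by
  unfold cs
  rw [Finset.sum_comm, Finset.sum_range_succ]
  congr 1
  exact Finset.sum_comm

lemma rowPartial_cs (X : Matrix (Fin n) (Fin n) ℝ) (i j : Fin n) :
    rowPartial X i j = cs X (i.1 + 1) (j.1 + 1) - cs X i.1 (j.1 + 1) := by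
  rw [cs_succ_left, rowPartial_eq]; ring

lemma colPartial_cs (X : Matrix (Fin n) (Fin n) ℝ) (i j : Fin n) :
    colPartial X i j = cs X (i.1 + 1) (j.1 + 1) - cs X (i.1 + 1) j.1 := by
  rw [cs_succ_right, colPartial_eq]; ring

lemma row_ment_sum (X : Matrix (Fin n) (Fin n) ℝ) (i : Fin n) :
    ∑ k ∈ Finset.range n, ment X i k = ∑ j, X i j := by
  rw [← Fin.sum_univ_eq_sum_range (fun k => ment X i.1 k) n]
  exact Finset.sum_congr rfl fun j _ => ment_apply X i j

lemma col_ment_sum (X : Matrix (Fin n) (Fin n) ℝ) (j : Fin n) :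
    ∑ k ∈ Finset.range n, ment X k j = ∑ i, X i j := by
  rw [← Fin.sum_univ_eq_sum_range (fun k => ment X k j.1) n]
  exact Finset.sum_congr rfl fun i _ => ment_apply X i j

lemma sum_row_cs (X : Matrix (Fin n) (Fin n) ℝ) (i : Fin n) :
    ∑ j, X i j = cs X (i.1 + 1) n - cs X i.1 n := by
  rw [cs_succ_left, row_ment_sum]; ring

lemma sum_col_cs (X : Matrix (Fin n) (Fin n) ℝ) (j : Fin n) :
    ∑ i, X i j = cs X n (j.1 + 1) - cs X n j.1 := by
  rw [cs_succ_right, col_ment_sum]; ring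

lemma cs_right_full (X : Matrix (Fin n) (Fin n) ℝ) (hX : ∀ i, ∑ j, X i j = 1)
    {a : ℕ} (ha : a ≤ n) : cs X a n = a := by
  induction a with
  | zero => simp [cs]
  | succ a ih =>
    have ha' : a < n := ha
    rw [cs_succ_left, ih (le_of_lt ha'),
      show (∑ k ∈ Finset.range n, ment X a k) = ∑ k ∈ Finset.range n, ment X (⟨a, ha'⟩ : Fin n).1 k from rfl,
      row_ment_sum X ⟨a, ha'⟩, hX]
    push_cast; ring

lemma cs_left_full (X : Matrix (Fin n) (Fin n) ℝ) (hX : ∀ j, ∑ i, X i j = 1)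
    {b : ℕ} (hb : b ≤ n) : cs X n b = b := by
  induction b with
  | zero => simp [cs]
  | succ b ih =>
    have hb' : b < n := hb
    rw [cs_succ_right, ih (le_of_lt hb'),
      show (∑ k ∈ Finset.range n, ment X k b) = ∑ k ∈ Finset.range n, ment X k (⟨b, hb'⟩ : Fin n).1 from rfl,
      col_ment_sum X ⟨b, hb'⟩, hX]
    push_cast; ring

lemma telescope (f : ℕ → ℕ → ℝ) (a b : ℕ) :
    ∑ i ∈ Finset.range a, ∑ j ∈ Finset.range b,
      (f (i+1) (j+1) - f i (j+1) - f (i+1) j + f i j)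
      = f a b - f a 0 - f 0 b + f 0 0 := by
  have inner : ∀ i, ∑ j ∈ Finset.range b, (f (i+1) (j+1) - f i (j+1) - f (i+1) j + f i j)
      = (f (i+1) b - f i b) - (f (i+1) 0 - f i 0) := by
    intro i
    rw [← Finset.sum_range_sub (fun j => f (i+1) j - f i j) b]
    exact Finset.sum_congr rfl fun j _ => by ring
  rw [Finset.sum_congr rfl fun i _ => inner i]
  calc ∑ i ∈ Finset.range a, (f (i+1) b - f i b - (f (i+1) 0 - f i 0))
      = ∑ i ∈ Finset.range a, ((fun i => f i b - f i 0) (i+1) - (fun i => f i b - f i 0) i) :=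
        Finset.sum_congr rfl fun i _ => by ring
    _ = (f a b - f a 0) - (f 0 b - f 0 0) := Finset.sum_range_sub (fun i => f i b - f i 0) a
    _ = f a b - f a 0 - f 0 b + f 0 0 := by ring

/-- The inequality description (the RHS of Statement 1). -/
def memP (X : Matrix (Fin n) (Fin n) ℝ) : Prop :=
  (∀ i j, 0 ≤ rowPartial X i j ∧ rowPartial X i j ≤ 1) ∧
  (∀ i j, 0 ≤ colPartial X i j ∧ colPartial X i j ≤ 1) ∧
  (∀ i, ∑ j, X i j = 1) ∧
  (∀ j, ∑ i, X i j = 1)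

/-- Uniform access to row/column partial sums. -/
noncomputable def cval (X : Matrix (Fin n) (Fin n) ℝ) (p : Bool × Fin n × Fin n) : ℝ :=
  if p.1 then rowPartial X p.2.1 p.2.2 else colPartial X p.2.1 p.2.2

def hiIdx (p : Bool × Fin n × Fin n) : ℕ × ℕ := (p.2.1.1 + 1, p.2.2.1 + 1)

def loIdx (p : Bool × Fin n × Fin n) : ℕ × ℕ :=
  if p.1 then (p.2.1.1, p.2.2.1 + 1) else (p.2.1.1 + 1, p.2.2.1)

lemma hiIdx_le (p : Bool × Fin n × Fin n) : (hiIdx p).1 ≤ n ∧ (hiIdx p).2 ≤ n :=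
  ⟨p.2.1.2, p.2.2.2⟩

lemma loIdx_le (p : Bool × Fin n × Fin n) : (loIdx p).1 ≤ n ∧ (loIdx p).2 ≤ n := by
  obtain ⟨b, i, j⟩ := p
  have hi := i.2; have hj := j.2
  cases b <;>
    simp only [loIdx, Bool.false_eq_true, if_true, if_false, ite_true, ite_false] <;>
    exact ⟨by omega, by omega⟩

lemma cval_cs (X : Matrix (Fin n) (Fin n) ℝ) (p : Bool × Fin n × Fin n) :
    cval X p = cs X (hiIdx p).1 (hiIdx p).2 - cs X (loIdx p).1 (loIdx p).2 := by
  obtain ⟨b, i, j⟩ := p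
  cases b <;> simp [cval, hiIdx, loIdx, rowPartial_cs, colPartial_cs]

lemma cval_bounds {X : Matrix (Fin n) (Fin n) ℝ} (hX : memP X) (p : Bool × Fin n × Fin n) :
    0 ≤ cval X p ∧ cval X p ≤ 1 := by
  obtain ⟨b, i, j⟩ := p
  cases b
  · simpa [cval] using hX.2.1 i j
  · simpa [cval] using hX.1 i j

lemma fract_zero_iff (v : ℝ) : Int.fract v = 0 ↔ ∃ z : ℤ, v = z := by
  constructor
  · intro h
    exact ⟨⌊v⌋, by have := Int.floor_add_fract v; rw [h, add_zero] at this; exact this.symm⟩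
  · rintro ⟨z, rfl⟩
    exact Int.fract_intCast z

/-- The indicator of the corner sums with fractional part `θ`. -/
noncomputable def chi (X : Matrix (Fin n) (Fin n) ℝ) (θ : ℝ) (a b : ℕ) : ℝ :=
  if Int.fract (cs X a b) = θ then 1 else 0

lemma chi_mem (X : Matrix (Fin n) (Fin n) ℝ) (θ : ℝ) (a b : ℕ) :
    chi X θ a b = 0 ∨ chi X θ a b = 1 := by
  unfold chi; split <;> simp

lemma chi_left0 {θ : ℝ} (hθ : θ ≠ 0) (X : Matrix (Fin n) (Fin n) ℝ) (b : ℕ) :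
    chi X θ 0 b = 0 := by
  rw [chi, if_neg]
  rw [cs_zero_left, Int.fract_zero]
  exact fun h => hθ h.symm

lemma chi_right0 {θ : ℝ} (hθ : θ ≠ 0) (X : Matrix (Fin n) (Fin n) ℝ) (a : ℕ) :
    chi X θ a 0 = 0 := by
  rw [chi, if_neg]
  rw [cs_zero_right, Int.fract_zero]
  exact fun h => hθ h.symm

lemma chi_top {θ : ℝ} (hθ : θ ≠ 0) {X : Matrix (Fin n) (Fin n) ℝ}
    (hX : ∀ i, ∑ j, X i j = 1) {a : ℕ} (ha : a ≤ n) : chi X θ a n = 0 := by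
  rw [chi, if_neg]
  rw [cs_right_full X hX ha, Int.fract_natCast]
  exact fun h => hθ h.symm

lemma chi_rightn {θ : ℝ} (hθ : θ ≠ 0) {X : Matrix (Fin n) (Fin n) ℝ}
    (hX : ∀ j, ∑ i, X i j = 1) {b : ℕ} (hb : b ≤ n) : chi X θ n b = 0 := by
  rw [chi, if_neg]
  rw [cs_left_full X hX hb, Int.fract_natCast]
  exact fun h => hθ h.symm

/-- The perturbation matrix. -/
noncomputable def pert (X : Matrix (Fin n) (Fin n) ℝ) (θ : ℝ) : Matrix (Fin n) (Fin n) ℝ :=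
  fun i j => chi X θ (i.1 + 1) (j.1 + 1) - chi X θ i.1 (j.1 + 1) - chi X θ (i.1 + 1) j.1
    + chi X θ i.1 j.1

lemma cs_pert {θ : ℝ} (hθ : θ ≠ 0) (X : Matrix (Fin n) (Fin n) ℝ) (t : ℝ)
    {a b : ℕ} (ha : a ≤ n) (hb : b ≤ n) :
    cs (X + t • pert X θ) a b = cs X a b + t * chi X θ a b := by
  have key : ∀ i ∈ Finset.range a, ∀ j ∈ Finset.range b,
      ment (X + t • pert X θ) i j = ment X i j
        + t * (chi X θ (i+1) (j+1) - chi X θ i (j+1) - chi X θ (i+1) j + chi X θ i j) := by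
    intro i hi j hj
    rw [Finset.mem_range] at hi hj
    have hi' : i < n := lt_of_lt_of_le hi ha
    have hj' : j < n := lt_of_lt_of_le hj hb
    rw [ment, dif_pos ⟨hi', hj'⟩, ment, dif_pos ⟨hi', hj'⟩]
    show X _ _ + t * pert X θ _ _ = _
    simp only [pert]
    try ring
  unfold cs
  rw [Finset.sum_congr rfl fun i hi => Finset.sum_congr rfl fun j hj => key i hi j hj]
  rw [show (∑ i ∈ Finset.range a, ∑ j ∈ Finset.range b,
      (ment X i j + t * (chi X θ (i+1) (j+1) - chi X θ i (j+1) - chi X θ (i+1) j + chi X θ i j)))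
      = (∑ i ∈ Finset.range a, ∑ j ∈ Finset.range b, ment X i j)
        + t * ∑ i ∈ Finset.range a, ∑ j ∈ Finset.range b,
            (chi X θ (i+1) (j+1) - chi X θ i (j+1) - chi X θ (i+1) j + chi X θ i j) by
    rw [Finset.mul_sum]
    rw [← Finset.sum_add_distrib]
    refine Finset.sum_congr rfl fun i _ => ?_
    rw [Finset.mul_sum, ← Finset.sum_add_distrib]]
  rw [telescope (chi X θ) a b, chi_right0 hθ, chi_left0 hθ, chi_right0 hθ]
  ring

/-- Direction of movement of a constraint under the perturbation. -/
noncomputable def moveD (X : Matrix (Fin n) (Fin n) ℝ) (θ : ℝ) (p : Bool × Fin n × Fin n) : ℝ :=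
  chi X θ (hiIdx p).1 (hiIdx p).2 - chi X θ (loIdx p).1 (loIdx p).2

lemma cval_pert {θ : ℝ} (hθ : θ ≠ 0) (X : Matrix (Fin n) (Fin n) ℝ) (t : ℝ)
    (p : Bool × Fin n × Fin n) :
    cval (X + t • pert X θ) p = cval X p + t * moveD X θ p := by
  rw [cval_cs, cval_cs, cs_pert hθ X t (hiIdx_le p).1 (hiIdx_le p).2,
    cs_pert hθ X t (loIdx_le p).1 (loIdx_le p).2, moveD]
  ring

lemma moveD_open {X : Matrix (Fin n) (Fin n) ℝ} (hX : memP X) (θ : ℝ)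
    (p : Bool × Fin n × Fin n) (hp : moveD X θ p ≠ 0) :
    0 < cval X p ∧ cval X p < 1 := by
  have hfr : Int.fract (cs X (hiIdx p).1 (hiIdx p).2)
      ≠ Int.fract (cs X (loIdx p).1 (loIdx p).2) := by
    intro h
    apply hp
    rw [moveD, chi, chi, h]
    ring
  have hnz : Int.fract (cval X p) ≠ 0 := by
    rw [cval_cs]
    intro h
    obtain ⟨z, hz⟩ := (fract_zero_iff _).1 h
    exact hfr (Int.fract_eq_fract.2 ⟨z, hz⟩)
  obtain ⟨h0, h1⟩ := cval_bounds hX p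
  constructor
  · rcases lt_or_eq_of_le h0 with h | h
    · exact h
    · exact absurd (by rw [← h, Int.fract_zero]) hnz
  · rcases lt_or_eq_of_le h1 with h | h
    · exact h
    · exact absurd (by rw [h, Int.fract_one]) hnz

lemma moveD_pm (X : Matrix (Fin n) (Fin n) ℝ) (θ : ℝ)
    (p : Bool × Fin n × Fin n) (hp : moveD X θ p ≠ 0) :
    moveD X θ p = 1 ∨ moveD X θ p = -1 := by
  rw [moveD] at hp ⊢
  rcases chi_mem X θ (hiIdx p).1 (hiIdx p).2 with h1 | h1 <;>
    rcases chi_mem X θ (loIdx p).1 (loIdx p).2 with h2 | h2 <;>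
    rw [h1, h2] at hp ⊢ <;> norm_num at *

/-- Constraints with fractional value. -/
noncomputable def fracSet (X : Matrix (Fin n) (Fin n) ℝ) : Finset (Bool × Fin n × Fin n) :=
  Finset.univ.filter fun p => Int.fract (cval X p) ≠ 0

lemma val01 {v : ℝ} (hf : Int.fract v = 0) (h0 : 0 ≤ v) (h1 : v ≤ 1) : v = 0 ∨ v = 1 := by
  obtain ⟨z, rfl⟩ := (fract_zero_iff v).1 hf
  have hz0 : (0:ℤ) ≤ z := by exact_mod_cast h0
  have hz1 : z ≤ 1 := by exact_mod_cast h1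
  interval_cases z <;> simp

lemma isASM_of_integral (X : Matrix (Fin n) (Fin n) ℝ) (hX : memP X)
    (h : fracSet X = ∅) : IsASM X := by
  have hall : ∀ p : Bool × Fin n × Fin n, Int.fract (cval X p) = 0 := by
    intro p
    by_contra hp
    have : p ∈ fracSet X := Finset.mem_filter.2 ⟨Finset.mem_univ _, hp⟩
    simp [h] at this
  have hrow : ∀ i j, rowPartial X i j = 0 ∨ rowPartial X i j = 1 := by
    intro i j
    have := hall (true, i, j)
    exact val01 (by simpa [cval] using this) (hX.1 i j).1 (hX.1 i j).2
  have hcol : ∀ i j, colPartial X i j = 0 ∨ colPartial X i j = 1 := by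
    intro i j
    have := hall (false, i, j)
    exact val01 (by simpa [cval] using this) (hX.2.1 i j).1 (hX.2.1 i j).2
  refine ⟨?_, hrow, hcol, hX.2.2.1, hX.2.2.2⟩
  intro i j
  have hXij : X i j = rowPartial X i j - ∑ k ∈ Finset.range j.1, ment X i k := by
    rw [rowPartial_eq, Finset.sum_range_succ, ment_apply]
    ring
  have hprev : (∑ k ∈ Finset.range j.1, ment X i.1 k) = 0
      ∨ (∑ k ∈ Finset.range j.1, ment X i.1 k) = 1 := by
    rcases Nat.eq_zero_or_pos j.1 with hj | hj
    · left; rw [hj]; simp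
    · have hm : j.1 - 1 < n := by omega
      have h2 := hrow i ⟨j.1 - 1, hm⟩
      rw [rowPartial_eq] at h2
      rwa [show (⟨j.1 - 1, hm⟩ : Fin n).1 + 1 = j.1 from by simp; omega] at h2
  rcases hrow i j with h1 | h1 <;> rcases hprev with h2 | h2 <;>
    rw [hXij, h1, h2] <;> norm_num

lemma pert_spec {X : Matrix (Fin n) (Fin n) ℝ} (hX : memP X) {θ : ℝ} (hθ : θ ≠ 0) (t : ℝ)
    (hb : ∀ p, 0 ≤ cval X p + t * moveD X θ p ∧ cval X p + t * moveD X θ p ≤ 1) :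
    memP (X + t • pert X θ) := by
  have hrowsum : ∀ i : Fin n, ∑ j, (X + t • pert X θ) i j = 1 := by
    intro i
    rw [sum_row_cs, cs_pert hθ X t i.2 le_rfl, cs_pert hθ X t (le_of_lt i.2) le_rfl,
      chi_top hθ hX.2.2.1 i.2, chi_top hθ hX.2.2.1 (le_of_lt i.2),
      cs_right_full X hX.2.2.1 i.2, cs_right_full X hX.2.2.1 (le_of_lt i.2)]
    push_cast; ring
  have hcolsum : ∀ j : Fin n, ∑ i, (X + t • pert X θ) i j = 1 := by
    intro j
    rw [sum_col_cs, cs_pert hθ X t le_rfl j.2, cs_pert hθ X t le_rfl (le_of_lt j.2),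
      chi_rightn hθ hX.2.2.2 j.2, chi_rightn hθ hX.2.2.2 (le_of_lt j.2),
      cs_left_full X hX.2.2.2 j.2, cs_left_full X hX.2.2.2 (le_of_lt j.2)]
    push_cast; ring
  refine ⟨fun i j => ?_, fun i j => ?_, hrowsum, hcolsum⟩
  · have h := hb (true, i, j)
    rw [← cval_pert hθ X t (true, i, j)] at h
    simpa [cval] using h
  · have h := hb (false, i, j)
    rw [← cval_pert hθ X t (false, i, j)] at h
    simpa [cval] using h

lemma pert_fracSet {X : Matrix (Fin n) (Fin n) ℝ} (hX : memP X) {θ : ℝ} (hθ : θ ≠ 0) (t : ℝ) :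
    fracSet (X + t • pert X θ) ⊆ fracSet X := by
  intro p hp
  rw [fracSet, Finset.mem_filter] at hp ⊢
  refine ⟨Finset.mem_univ _, ?_⟩
  by_cases hm : moveD X θ p = 0
  · rw [cval_pert hθ X t p, hm, mul_zero, add_zero] at hp
    exact hp.2
  · have ho := moveD_open hX θ p hm
    rw [Int.fract_eq_self.2 ⟨le_of_lt ho.1, ho.2⟩]
    exact ne_of_gt ho.1

lemma step (X : Matrix (Fin n) (Fin n) ℝ) (hX : memP X) (hne : (fracSet X).Nonempty) :
    ∃ Y Z : Matrix (Fin n) (Fin n) ℝ, memP Y ∧ memP Z ∧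
      (fracSet Y).card < (fracSet X).card ∧ (fracSet Z).card < (fracSet X).card ∧
      X ∈ segment ℝ Y Z := by
  classical
  obtain ⟨p₀, hp₀⟩ := hne
  have hfrac : Int.fract (cval X p₀) ≠ 0 := (Finset.mem_filter.1 hp₀).2
  have hne' : Int.fract (cs X (hiIdx p₀).1 (hiIdx p₀).2)
      ≠ Int.fract (cs X (loIdx p₀).1 (loIdx p₀).2) := by
    intro h
    apply hfrac
    obtain ⟨z, hz⟩ := Int.fract_eq_fract.1 h
    rw [cval_cs, hz, Int.fract_intCast]
  obtain ⟨a₀, b₀, ha₀, hb₀, hT⟩ : ∃ a₀ b₀, a₀ ≤ n ∧ b₀ ≤ n ∧ Int.fract (cs X a₀ b₀) ≠ 0 := by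
    by_cases h : Int.fract (cs X (hiIdx p₀).1 (hiIdx p₀).2) = 0
    · exact ⟨_, _, (loIdx_le p₀).1, (loIdx_le p₀).2, fun h' => hne' (h.trans h'.symm)⟩
    · exact ⟨_, _, (hiIdx_le p₀).1, (hiIdx_le p₀).2, h⟩
  set θ := Int.fract (cs X a₀ b₀) with hθdef
  have hθ : θ ≠ 0 := hT
  have hchi₀ : chi X θ a₀ b₀ = 1 := if_pos rfl
  have hb₀n : b₀ < n := by
    rcases lt_or_eq_of_le hb₀ with h | h
    · exact h
    · exfalso; apply hθ; rw [hθdef, h, cs_right_full X hX.2.2.1 ha₀, Int.fract_natCast]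
  -- moving constraints exist
  have hMne' : ∃ p : Bool × Fin n × Fin n, moveD X θ p ≠ 0 := by
    have ha₀0 : 0 < a₀ := by
      rcases Nat.eq_zero_or_pos a₀ with h | h
      · exfalso; apply hθ; rw [hθdef, h, cs_zero_left, Int.fract_zero]
      · exact h
    have hkey : ∃ k, b₀ ≤ k ∧ k < n ∧ chi X θ a₀ k ≠ chi X θ a₀ (k+1) := by
      by_contra hcon
      push_neg at hcon
      have H : ∀ c, b₀ ≤ c → c ≤ n → chi X θ a₀ b₀ = chi X θ a₀ c := by
        intro c hc
        induction c, hc using Nat.le_induction with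
        | base => intro _; rfl
        | succ c hc ih => intro hcn; rw [ih (by omega), hcon c hc (by omega)]
      have hcontr := H n (le_of_lt hb₀n) le_rfl
      rw [hchi₀, chi_top hθ hX.2.2.1 ha₀] at hcontr
      norm_num at hcontr
    obtain ⟨k, hk1, hk2, hk3⟩ := hkey
    obtain ⟨a₁, rfl⟩ : ∃ a₁, a₀ = a₁ + 1 := ⟨a₀ - 1, by omega⟩
    refine ⟨(false, ⟨a₁, by omega⟩, ⟨k, hk2⟩), ?_⟩
    have hne3 : chi X θ (a₁+1) (k+1) - chi X θ (a₁+1) k ≠ 0 := sub_ne_zero.2 (Ne.symm hk3)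
    simpa [moveD, hiIdx, loIdx] using hne3
  obtain ⟨pw, hpw⟩ := hMne'
  have hMSne : (Finset.univ.filter fun p => moveD X θ p ≠ 0).Nonempty :=
    ⟨pw, Finset.mem_filter.2 ⟨Finset.mem_univ _, hpw⟩⟩
  set MS := Finset.univ.filter fun p => moveD X θ p ≠ 0 with hMSdef
  have hmem : ∀ p ∈ MS, moveD X θ p ≠ 0 := fun p hp => (Finset.mem_filter.1 hp).2
  set εP := MS.inf' hMSne (fun p => if moveD X θ p = 1 then 1 - cval X p else cval X p)
    with hεPdef
  set εM := MS.inf' hMSne (fun p => if moveD X θ p = 1 then cval X p else 1 - cval X p)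
    with hεMdef
  have hεPpos : 0 < εP := by
    rw [hεPdef]
    refine (Finset.lt_inf'_iff hMSne).2 fun p hp => ?_
    obtain ⟨h1, h2⟩ := moveD_open hX θ p (hmem p hp)
    try dsimp only
    split <;> linarith
  have hεMpos : 0 < εM := by
    rw [hεMdef]
    refine (Finset.lt_inf'_iff hMSne).2 fun p hp => ?_
    obtain ⟨h1, h2⟩ := moveD_open hX θ p (hmem p hp)
    try dsimp only
    split <;> linarith
  have hbP : ∀ p, 0 ≤ cval X p + εP * moveD X θ p ∧ cval X p + εP * moveD X θ p ≤ 1 := by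
    intro p
    by_cases hm : moveD X θ p = 0
    · rw [hm, mul_zero, add_zero]; exact cval_bounds hX p
    · have hpmem : p ∈ MS := Finset.mem_filter.2 ⟨Finset.mem_univ _, hm⟩
      have hle := Finset.inf'_le (fun p => if moveD X θ p = 1 then 1 - cval X p else cval X p) hpmem
      rw [← hεPdef] at hle
      try dsimp only at hle
      obtain ⟨h1, h2⟩ := moveD_open hX θ p hm
      rcases moveD_pm X θ p hm with hd | hd
      · rw [hd] at hle ⊢
        rw [if_pos rfl] at hle
        constructor <;> linarith
      · rw [hd] at hle ⊢
        rw [if_neg (by norm_num)] at hle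
        constructor <;> linarith
  have hbM : ∀ p, 0 ≤ cval X p + (-εM) * moveD X θ p ∧ cval X p + (-εM) * moveD X θ p ≤ 1 := by
    intro p
    by_cases hm : moveD X θ p = 0
    · rw [hm, mul_zero, add_zero]; exact cval_bounds hX p
    · have hpmem : p ∈ MS := Finset.mem_filter.2 ⟨Finset.mem_univ _, hm⟩
      have hle := Finset.inf'_le (fun p => if moveD X θ p = 1 then cval X p else 1 - cval X p) hpmem
      rw [← hεMdef] at hle
      try dsimp only at hle
      obtain ⟨h1, h2⟩ := moveD_open hX θ p hm
      rcases moveD_pm X θ p hm with hd | hd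
      · rw [hd] at hle ⊢
        rw [if_pos rfl] at hle
        constructor <;> linarith
      · rw [hd] at hle ⊢
        rw [if_neg (by norm_num)] at hle
        constructor <;> linarith
  have hhitP : ∃ q, moveD X θ q ≠ 0 ∧ Int.fract (cval X q + εP * moveD X θ q) = 0 := by
    obtain ⟨q, hq, hqe⟩ := Finset.exists_mem_eq_inf' hMSne
      (fun p => if moveD X θ p = 1 then 1 - cval X p else cval X p)
    rw [← hεPdef] at hqe
    try dsimp only at hqe
    have hqm := hmem q hq
    refine ⟨q, hqm, ?_⟩
    rcases moveD_pm X θ q hqm with hd | hd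
    · rw [if_pos hd] at hqe
      rw [hd, hqe, show cval X q + (1 - cval X q) * 1 = 1 from by ring, Int.fract_one]
    · rw [if_neg (by rw [hd]; norm_num)] at hqe
      rw [hd, hqe, show cval X q + cval X q * (-1) = 0 from by ring, Int.fract_zero]
  have hhitM : ∃ q, moveD X θ q ≠ 0 ∧ Int.fract (cval X q + (-εM) * moveD X θ q) = 0 := by
    obtain ⟨q, hq, hqe⟩ := Finset.exists_mem_eq_inf' hMSne
      (fun p => if moveD X θ p = 1 then cval X p else 1 - cval X p)
    rw [← hεMdef] at hqe
    try dsimp only at hqe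
    have hqm := hmem q hq
    refine ⟨q, hqm, ?_⟩
    rcases moveD_pm X θ q hqm with hd | hd
    · rw [if_pos hd] at hqe
      rw [hd, hqe, show cval X q + -(cval X q) * 1 = 0 from by ring, Int.fract_zero]
    · rw [if_neg (by rw [hd]; norm_num)] at hqe
      rw [hd, hqe, show cval X q + -(1 - cval X q) * (-1) = 1 from by ring, Int.fract_one]
  have hssub : ∀ t : ℝ, (∃ q, moveD X θ q ≠ 0 ∧ Int.fract (cval X q + t * moveD X θ q) = 0) →
      fracSet (X + t • pert X θ) ⊂ fracSet X := by
    intro t ⟨q, hq1, hq2⟩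
    rw [Finset.ssubset_iff_of_subset (pert_fracSet hX hθ t)]
    refine ⟨q, ?_, ?_⟩
    · have ho := moveD_open hX θ q hq1
      exact Finset.mem_filter.2 ⟨Finset.mem_univ _,
        by rw [Int.fract_eq_self.2 ⟨le_of_lt ho.1, ho.2⟩]; exact ne_of_gt ho.1⟩
    · intro hmem'
      have hcontr := (Finset.mem_filter.1 hmem').2
      rw [cval_pert hθ X t q] at hcontr
      exact hcontr hq2
  have hsum : (0:ℝ) < εP + εM := by linarith
  refine ⟨X + εP • pert X θ, X + (-εM) • pert X θ,
    pert_spec hX hθ εP hbP, pert_spec hX hθ (-εM) hbM,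
    Finset.card_lt_card (hssub εP hhitP), Finset.card_lt_card (hssub (-εM) hhitM),
    εM / (εP + εM), εP / (εP + εM), by positivity, by positivity,
    by field_simp; ring, ?_⟩
  have hcoef2 : εM / (εP + εM) * εP + εP / (εP + εM) * (-εM) = 0 := by
    field_simp
    ring
  have hcoef : εM / (εP + εM) + εP / (εP + εM) = 1 := by field_simp; ring
  calc (εM/(εP+εM)) • (X + εP • pert X θ) + (εP/(εP+εM)) • (X + (-εM) • pert X θ)
      = (εM/(εP+εM) + εP/(εP+εM)) • X
        + (εM/(εP+εM) * εP + εP/(εP+εM) * (-εM)) • pert X θ := by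
        rw [smul_add, smul_add, smul_smul, smul_smul, add_smul, add_smul]
        abel
    _ = X := by rw [hcoef, hcoef2, one_smul, zero_smul, add_zero]

lemma memP_mem_polytope :
    ∀ (N : ℕ) (X : Matrix (Fin n) (Fin n) ℝ), memP X → (fracSet X).card ≤ N →
      X ∈ ASMPolytope n := by
  intro N
  induction N with
  | zero =>
    intro X hX hc
    have he : fracSet X = ∅ := Finset.card_eq_zero.1 (Nat.le_zero.1 hc)
    exact subset_convexHull ℝ {A : Matrix (Fin n) (Fin n) ℝ | IsASM A}
      (isASM_of_integral X hX he)
  | succ N ih =>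
    intro X hX hc
    rcases Finset.eq_empty_or_nonempty (fracSet X) with he | hne
    · exact subset_convexHull ℝ {A : Matrix (Fin n) (Fin n) ℝ | IsASM A}
        (isASM_of_integral X hX he)
    · obtain ⟨Y, Z, hY, hZ, hcY, hcZ, hseg⟩ := step X hX hne
      exact (convex_convexHull ℝ {A : Matrix (Fin n) (Fin n) ℝ | IsASM A}).segment_subset
        (ih Y hY (by omega)) (ih Z hZ (by omega)) hseg

lemma memP_convex : Convex ℝ {X : Matrix (Fin n) (Fin n) ℝ | memP X} := by
  intro x hx y hy a b ha hb hab
  simp only [Set.mem_setOf_eq] at hx hy ⊢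
  have hr : ∀ i j, rowPartial (a • x + b • y) i j
      = a * rowPartial x i j + b * rowPartial y i j := by
    intro i j
    simp only [rowPartial, Matrix.add_apply, Matrix.smul_apply, smul_eq_mul,
      Finset.mul_sum, Finset.sum_add_distrib]
  have hcp : ∀ i j, colPartial (a • x + b • y) i j
      = a * colPartial x i j + b * colPartial y i j := by
    intro i j
    simp only [colPartial, Matrix.add_apply, Matrix.smul_apply, smul_eq_mul,
      Finset.mul_sum, Finset.sum_add_distrib]
  have hrs : ∀ i, ∑ j, (a • x + b • y) i j = 1 := by
    intro i
    simp only [Matrix.add_apply, Matrix.smul_apply, smul_eq_mul,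
      Finset.sum_add_distrib, ← Finset.mul_sum, hx.2.2.1 i, hy.2.2.1 i, mul_one]
    exact hab
  have hcs : ∀ j, ∑ i, (a • x + b • y) i j = 1 := by
    intro j
    simp only [Matrix.add_apply, Matrix.smul_apply, smul_eq_mul,
      Finset.sum_add_distrib, ← Finset.mul_sum, hx.2.2.2 j, hy.2.2.2 j, mul_one]
    exact hab
  refine ⟨fun i j => ?_, fun i j => ?_, hrs, hcs⟩
  · rw [hr]
    obtain ⟨h1, h2⟩ := hx.1 i j
    obtain ⟨h3, h4⟩ := hy.1 i j
    constructor <;> nlinarith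
  · rw [hcp]
    obtain ⟨h1, h2⟩ := hx.2.1 i j
    obtain ⟨h3, h4⟩ := hy.2.1 i j
    constructor <;> nlinarith

end Aux

/-- inequality description of the ASM polytope. -/
theorem asm_polytope_inequality_description (n : ℕ) (X : Matrix (Fin n) (Fin n) ℝ) :
    X ∈ ASMPolytope n ↔
      ((∀ i j, 0 ≤ rowPartial X i j ∧ rowPartial X i j ≤ 1) ∧
       (∀ i j, 0 ≤ colPartial X i j ∧ colPartial X i j ≤ 1) ∧
       (∀ i, ∑ j, X i j = 1) ∧
       (∀ j, ∑ i, X i j = 1)) := by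
  constructor
  · intro hX
    have hsub : {A : Matrix (Fin n) (Fin n) ℝ | IsASM A}
        ⊆ {Y : Matrix (Fin n) (Fin n) ℝ | memP Y} := by
      intro A hA
      obtain ⟨hent, hrow, hcol, hrs, hcs⟩ := hA
      refine ⟨fun i j => ?_, fun i j => ?_, hrs, hcs⟩
      · rcases hrow i j with h | h <;> rw [h] <;> norm_num
      · rcases hcol i j with h | h <;> rw [h] <;> norm_num
    exact convexHull_min hsub memP_convex hX
  · intro h
    exact memP_mem_polytope (fracSet X).card X h le_rfl

end ASMPaper
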